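/- For every natural number d and every real L with 0 < L ≤ 8^d, it holds that 3·√(L·2^d) − 2·L/2^d ≥ L^{2/3}. -/
import Mathlib


theorem stmt_3 (d : ℕ) (L : ℝ) (hL : 0 < L) (hLd : L ≤ 8^d) :
    3 * Real.sqrt (L * 2^d) - 2 * L / 2^d ≥ L ^ ((2:ℝ)/3) := by
  set t : ℝ := 2^d with htdef
  have ht1 : (1:ℝ) ≤ t := one_le_pow₀ (by norm_num)
  have ht0 : (0:ℝ) < t := lt_of_lt_of_le one_pos ht1
  have hLt3 : L ≤ t^3 := by
    calc L ≤ 8^d := hLd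
    _ = t^3 := by
        rw [htdef, show (8:ℝ) = 2^3 by norm_num, ← pow_mul, mul_comm, pow_mul]
  have hL13 : L ^ ((1:ℝ)/3) ≤ t := by
    have h := Real.rpow_le_rpow hL.le hLt3 (by norm_num : (0:ℝ) ≤ 1/3)
    rwa [← Real.rpow_natCast t 3, ← Real.rpow_mul ht0.le,
      show ((3:ℕ):ℝ)*(1/3) = 1 by norm_num, Real.rpow_one] at h
  have h13pos : 0 < L ^ ((1:ℝ)/3) := Real.rpow_pos_of_pos hL _
  have h23pos : 0 < L ^ ((2:ℝ)/3) := Real.rpow_pos_of_pos hL _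
  have hsq : Real.sqrt (L * t) ≥ L ^ ((2:ℝ)/3) := by
    have h1 : L ^ ((4:ℝ)/3) ≤ L * t := by
      calc L ^ ((4:ℝ)/3) = L * L ^ ((1:ℝ)/3) := by
            rw [show (4:ℝ)/3 = 1 + 1/3 by norm_num, Real.rpow_add hL, Real.rpow_one]
        _ ≤ L * t := mul_le_mul_of_nonneg_left hL13 hL.le
    have h2 : Real.sqrt (L ^ ((4:ℝ)/3)) = L ^ ((2:ℝ)/3) := by
      have he : L ^ ((4:ℝ)/3) = (L ^ ((2:ℝ)/3))^2 := by
        rw [← Real.rpow_natCast (L ^ ((2:ℝ)/3)) 2, ← Real.rpow_mul hL.le]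
        norm_num
      rw [he, Real.sqrt_sq h23pos.le]
    calc L ^ ((2:ℝ)/3) = Real.sqrt (L ^ ((4:ℝ)/3)) := h2.symm
      _ ≤ Real.sqrt (L * t) := Real.sqrt_le_sqrt h1
  have hdiv : 2 * L / t ≤ 2 * L ^ ((2:ℝ)/3) := by
    have hd : L / t ≤ L / L ^ ((1:ℝ)/3) :=
      div_le_div_of_nonneg_left hL.le h13pos hL13
    have heq : L / L ^ ((1:ℝ)/3) = L ^ ((2:ℝ)/3) := by
      rw [show (2:ℝ)/3 = 1 - 1/3 by norm_num, Real.rpow_sub hL, Real.rpow_one]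
    rw [mul_div_assoc]
    rw [heq] at hd
    linarith
  linarith
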